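/- Let c, r be positive integers and let [c^r] denote the partition consisting of r parts all equal to c. Then, in the polynomial ring of symmetric polynomials in N variables, (s_{[c^r]})^2 = s_{[c^{r−1}]} · s_{[c^{r+1}]} + s_{[(c−1)^r]} · s_{[(c+1)^r]}. -/

import Mathlib

/-- The complete homogeneous symmetric polynomial of degree `m` in `N` variables
over `ℤ`, with `h 0 = 1` and `h m = 0` for `m < 0`. -/
noncomputable def hciz (N : ℕ) (m : ℤ) : MvPolynomial (Fin N) ℤ :=
  if 0 ≤ m then MvPolynomial.hsymm (Fin N) ℤ m.toNat else 0

/-- The Schur function of a finite integer sequence `μ = (μ 0, …, μ (r-1))`,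
defined via the Jacobi–Trudi formula as the determinant of the `r × r` matrix
with `(i, j)` entry `h_{μ i − i + j}` (for the empty sequence this is `1`). -/
noncomputable def schur (N r : ℕ) (μ : Fin r → ℤ) : MvPolynomial (Fin N) ℤ :=
  (Matrix.of fun i j : Fin r => hciz N (μ i - (i : ℕ) + (j : ℕ))).det

section DesnanotJacobi

open Matrix

variable {R : Type*} [CommRing R] {n : ℕ}

/-- Equiv separating indices `0` and `last` from the middle ones. -/
def djEquiv (n : ℕ) : Fin 2 ⊕ Fin n ≃ Fin (n + 2) where
  toFun x := Sum.elim (fun i => if i = 0 then 0 else Fin.last (n + 1))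
    (fun k => k.succ.castSucc) x
  invFun j :=
    if h : (j : ℕ) = 0 then Sum.inl 0
    else if h2 : (j : ℕ) = n + 1 then Sum.inl 1
    else Sum.inr ⟨(j : ℕ) - 1, by have := j.isLt; omega⟩
  left_inv x := by
    rcases x with i | k
    · fin_cases i <;> simp [Fin.ext_iff, -Fin.val_eq_zero_iff]
    · have h1 : (k.succ.castSucc : ℕ) = (k : ℕ) + 1 := by simp
      have hk := k.isLt
      simp only [Sum.elim_inr, h1]
      rw [dif_neg (by omega), dif_neg (by omega)]
      simp
  right_inv j := by
    dsimp only
    by_cases h : (j : ℕ) = 0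
    · simp only [dif_pos h]
      simp [Fin.ext_iff, h.symm]
      omega
    · by_cases h2 : (j : ℕ) = n + 1
      · rw [dif_neg h, dif_pos h2]
        rw [Sum.elim_inl, if_neg (by decide)]
        exact Fin.ext (by simp [h2])
      · rw [dif_neg h, dif_neg h2]
        have := j.isLt
        rw [Sum.elim_inr]
        exact Fin.ext (by simp; omega)

lemma djEquiv_inl_zero : djEquiv n (Sum.inl 0) = 0 := rfl
lemma djEquiv_inl_one : djEquiv n (Sum.inl 1) = Fin.last (n + 1) := rfl
lemma djEquiv_inr (k : Fin n) : djEquiv n (Sum.inr k) = k.succ.castSucc := rfl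

/-- Auxiliary matrix: identity with first and last columns replaced by those of
the adjugate. -/
noncomputable def djC (A : Matrix (Fin (n + 2)) (Fin (n + 2)) R) :
    Matrix (Fin (n + 2)) (Fin (n + 2)) R :=
  of fun i j => if j = 0 ∨ j = Fin.last (n + 1) then A.adjugate i j
    else (1 : Matrix (Fin (n + 2)) (Fin (n + 2)) R) i j

lemma mid_ne_zero (k : Fin n) : (k.succ.castSucc : Fin (n + 2)) ≠ 0 := by
  simp [Fin.ext_iff]

lemma mid_ne_last (k : Fin n) : (k.succ.castSucc : Fin (n + 2)) ≠ Fin.last (n + 1) := by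
  have := k.isLt
  simp [Fin.ext_iff]
  omega

lemma zero_ne_last : (0 : Fin (n + 2)) ≠ Fin.last (n + 1) := by
  simp [Fin.ext_iff]

lemma det_djC (A : Matrix (Fin (n + 2)) (Fin (n + 2)) R) :
    (djC A).det = A.adjugate 0 0 * A.adjugate (Fin.last (n + 1)) (Fin.last (n + 1))
      - A.adjugate 0 (Fin.last (n + 1)) * A.adjugate (Fin.last (n + 1)) 0 := by
  have hsub : (djC A).submatrix (djEquiv n) (djEquiv n) =
      fromBlocks
        !![A.adjugate 0 0, A.adjugate 0 (Fin.last (n + 1));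
           A.adjugate (Fin.last (n + 1)) 0, A.adjugate (Fin.last (n + 1)) (Fin.last (n + 1))]
        0
        (of fun k i => A.adjugate (Fin.castSucc (Fin.succ k))
          (if i = 0 then 0 else Fin.last (n + 1)))
        (1 : Matrix (Fin n) (Fin n) R) := by
    ext x y
    rcases x with i | k <;> rcases y with i' | l
    · fin_cases i <;> fin_cases i' <;>
        simp [djC, djEquiv_inl_zero, djEquiv_inl_one, fromBlocks, zero_ne_last,
          (zero_ne_last (n := n)).symm]
    · fin_cases i <;>
        simp [djC, djEquiv_inl_zero, djEquiv_inl_one, djEquiv_inr, fromBlocks,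
          mid_ne_zero, mid_ne_last, (mid_ne_zero l).symm, (mid_ne_last l).symm,
          Fin.succ_ne_zero, Matrix.one_apply, (Fin.succ_ne_zero _).symm,
          (show Fin.last (n + 1) ≠ l.castSucc.succ from (mid_ne_last l).symm)]
    · fin_cases i' <;>
        simp [djC, djEquiv_inl_zero, djEquiv_inl_one, djEquiv_inr, fromBlocks]
    · have : (k.succ.castSucc : Fin (n + 2)) = l.succ.castSucc ↔ k = l := by
        simp [Fin.ext_iff]
      simp [djC, djEquiv_inr, fromBlocks, mid_ne_zero, mid_ne_last,
        Fin.succ_ne_zero, Matrix.one_apply, this]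
  rw [← det_submatrix_equiv_self (djEquiv n), hsub, det_fromBlocks_zero₁₂, det_one, mul_one,
    det_fin_two]
  simp

lemma mul_djC_apply (A : Matrix (Fin (n + 2)) (Fin (n + 2)) R) (i j : Fin (n + 2)) :
    (A * djC A) i j = if j = 0 ∨ j = Fin.last (n + 1)
      then A.det * (1 : Matrix (Fin (n + 2)) (Fin (n + 2)) R) i j else A i j := by
  rw [Matrix.mul_apply]
  by_cases hj : j = 0 ∨ j = Fin.last (n + 1)
  · rw [if_pos hj]
    have : ∀ k, A i k * djC A k j = A i k * A.adjugate k j := by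
      intro k; rw [djC]; simp [if_pos hj]
    rw [Finset.sum_congr rfl fun k _ => this k, ← Matrix.mul_apply, Matrix.mul_adjugate]
    simp [Matrix.one_apply]
  · rw [if_neg hj]
    have : ∀ k, A i k * djC A k j = A i k * (1 : Matrix (Fin (n + 2)) (Fin (n + 2)) R) k j := by
      intro k; rw [djC]; simp [if_neg hj]
    rw [Finset.sum_congr rfl fun k _ => this k, ← Matrix.mul_apply, Matrix.mul_one]

lemma det_mul_djC (A : Matrix (Fin (n + 2)) (Fin (n + 2)) R) :
    (A * djC A).det = A.det ^ 2 *
      (A.submatrix (fun k : Fin n => k.succ.castSucc) (fun k : Fin n => k.succ.castSucc)).det := by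
  have hsub : (A * djC A).submatrix (djEquiv n) (djEquiv n) =
      fromBlocks (A.det • (1 : Matrix (Fin 2) (Fin 2) R))
        (of fun i k => A (if i = 0 then 0 else Fin.last (n + 1)) (Fin.castSucc (Fin.succ k)))
        0
        (A.submatrix (fun k : Fin n => k.succ.castSucc) (fun k : Fin n => k.succ.castSucc)) := by
    ext x y
    rcases x with i | k <;> rcases y with i' | l
    · fin_cases i <;> fin_cases i' <;>
        simp [mul_djC_apply, djEquiv_inl_zero, djEquiv_inl_one, fromBlocks, zero_ne_last,
          (zero_ne_last (n := n)).symm, Matrix.one_apply]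
    · fin_cases i <;>
        simp [mul_djC_apply, djEquiv_inl_zero, djEquiv_inl_one, djEquiv_inr, fromBlocks,
          mid_ne_zero l, mid_ne_last l, (mid_ne_zero l).symm, (mid_ne_last l).symm,
          Fin.succ_ne_zero]
    · fin_cases i' <;>
        simp [mul_djC_apply, djEquiv_inl_zero, djEquiv_inl_one, djEquiv_inr, fromBlocks,
          mid_ne_zero, mid_ne_last, Matrix.one_apply, zero_ne_last, Fin.succ_ne_zero,
          (zero_ne_last (n := n)).symm]
    · simp [mul_djC_apply, djEquiv_inr, fromBlocks, mid_ne_zero, mid_ne_last,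
        Fin.succ_ne_zero]
  rw [← det_submatrix_equiv_self (djEquiv n), hsub, det_fromBlocks_zero₂₁, det_smul, det_one,
    mul_one]
  norm_num

/-- Desnanot–Jacobi in terms of adjugate entries, over any commutative ring. -/
lemma desnanot_jacobi_adjugate (A : Matrix (Fin (n + 2)) (Fin (n + 2)) R) :
    A.det * (A.submatrix (fun k : Fin n => k.succ.castSucc)
        (fun k : Fin n => k.succ.castSucc)).det
      = A.adjugate 0 0 * A.adjugate (Fin.last (n + 1)) (Fin.last (n + 1))
        - A.adjugate 0 (Fin.last (n + 1)) * A.adjugate (Fin.last (n + 1)) 0 := by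
  let G := mvPolynomialX (Fin (n + 2)) (Fin (n + 2)) ℤ
  have key : G.det * (G.submatrix (fun k : Fin n => k.succ.castSucc)
      (fun k : Fin n => k.succ.castSucc)).det
      = G.adjugate 0 0 * G.adjugate (Fin.last (n + 1)) (Fin.last (n + 1))
        - G.adjugate 0 (Fin.last (n + 1)) * G.adjugate (Fin.last (n + 1)) 0 := by
    apply mul_left_cancel₀ (det_mvPolynomialX_ne_zero (Fin (n + 2)) ℤ)
    rw [← det_djC, ← det_mul, det_mul_djC, pow_two, mul_assoc]
  have hmap := congrArg (MvPolynomial.aeval fun p : Fin (n + 2) × Fin (n + 2) => A p.1 p.2) key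
  let f := (MvPolynomial.aeval fun p : Fin (n + 2) × Fin (n + 2) => A p.1 p.2 :
    MvPolynomial (Fin (n + 2) × Fin (n + 2)) ℤ →ₐ[ℤ] R)
  have hGA : f.mapMatrix G = A := mvPolynomialX_mapMatrix_aeval ℤ A
  have hadj : ∀ i j, f (G.adjugate i j) = A.adjugate i j := by
    intro i j
    have := AlgHom.map_adjugate f G
    rw [hGA] at this
    exact congrFun (congrFun (congrArg (fun M => (M : Matrix _ _ R)) this) i) j
  have hdet : f G.det = A.det := by rw [AlgHom.map_det, hGA]
  have hdet' : f (G.submatrix (fun k : Fin n => k.succ.castSucc)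
      (fun k : Fin n => k.succ.castSucc)).det
      = (A.submatrix (fun k : Fin n => k.succ.castSucc)
        (fun k : Fin n => k.succ.castSucc)).det := by
    rw [AlgHom.map_det]
    congr 1
    ext i j
    have := congrFun (congrFun (congrArg (fun M => (M : Matrix _ _ R)) hGA) (i.succ.castSucc))
      (j.succ.castSucc)
    simpa using this
  simpa only [_root_.map_mul, map_sub, hadj, hdet, hdet'] using congrArg f key

/-- **Desnanot–Jacobi / Dodgson condensation** over any commutative ring. -/
lemma desnanot_jacobi (A : Matrix (Fin (n + 2)) (Fin (n + 2)) R) :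
    A.det * (A.submatrix (fun k : Fin n => k.succ.castSucc)
        (fun k : Fin n => k.succ.castSucc)).det
      = (A.submatrix Fin.castSucc Fin.castSucc).det * (A.submatrix Fin.succ Fin.succ).det
        - (A.submatrix Fin.castSucc Fin.succ).det * (A.submatrix Fin.succ Fin.castSucc).det := by
  rw [desnanot_jacobi_adjugate]
  rw [adjugate_fin_succ_eq_det_submatrix, adjugate_fin_succ_eq_det_submatrix,
    adjugate_fin_succ_eq_det_submatrix, adjugate_fin_succ_eq_det_submatrix]
  simp only [Fin.succAbove_last, Fin.val_zero, Fin.val_last]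
  rw [show (Fin.succAbove (0 : Fin (n + 2))) = Fin.succ from funext fun i => rfl]
  ring_nf
  rw [show ((-1 : R)) ^ (n * 2) = 1 from Even.neg_one_pow ⟨n, by ring⟩]
  ring

end DesnanotJacobi

/-- **Kirillov's identity.** For positive integers `c, r`, with `[c^r]` the
partition consisting of `r` parts all equal to `c`:
`(s_{[c^r]})² = s_{[c^{r−1}]} · s_{[c^{r+1}]} + s_{[(c−1)^r]} · s_{[(c+1)^r]}`. -/
theorem schur_rectangle_condensation (N : ℕ) (hN : 1 ≤ N) (c r : ℕ)
    (hc : 0 < c) (hr : 0 < r) :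
    schur N r (fun _ => (c : ℤ)) ^ 2
    = schur N (r - 1) (fun _ => (c : ℤ)) * schur N (r + 1) (fun _ => (c : ℤ))
      + schur N r (fun _ => (c : ℤ) - 1) * schur N r (fun _ => (c : ℤ) + 1) := by
  obtain ⟨n, rfl⟩ : ∃ n, r = n + 1 := ⟨r - 1, by omega⟩
  show schur N (n + 1) (fun _ => (c : ℤ)) ^ 2
    = schur N n (fun _ : Fin n => (c : ℤ)) * schur N (n + 2) (fun _ : Fin (n + 2) => (c : ℤ))
      + schur N (n + 1) (fun _ => (c : ℤ) - 1) * schur N (n + 1) (fun _ => (c : ℤ) + 1)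
  set A : Matrix (Fin (n + 2)) (Fin (n + 2)) (MvPolynomial (Fin N) ℤ) :=
    Matrix.of fun i j => hciz N ((c : ℤ) - (i : ℕ) + (j : ℕ)) with hA
  have key := desnanot_jacobi A
  have e1 : A.det = schur N (n + 2) (fun _ => (c : ℤ)) := rfl
  have e2 : (A.submatrix (fun k : Fin n => k.succ.castSucc)
      (fun k : Fin n => k.succ.castSucc)).det = schur N n (fun _ => (c : ℤ)) := by
    unfold schur
    congr 1
    ext i j
    simp only [Matrix.submatrix_apply, Matrix.of_apply, hA]
    congr 1
    push_cast [Fin.coe_castSucc, Fin.val_succ]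
    ring
  have e3 : (A.submatrix Fin.castSucc Fin.castSucc).det
      = schur N (n + 1) (fun _ => (c : ℤ)) := rfl
  have e4 : (A.submatrix Fin.succ Fin.succ).det = schur N (n + 1) (fun _ => (c : ℤ)) := by
    unfold schur
    congr 1
    ext i j
    simp only [Matrix.submatrix_apply, Matrix.of_apply, hA]
    congr 1
    push_cast [Fin.val_succ]
    ring
  have e5 : (A.submatrix Fin.castSucc Fin.succ).det
      = schur N (n + 1) (fun _ => (c : ℤ) + 1) := by
    unfold schur
    congr 1
    ext i j
    simp only [Matrix.submatrix_apply, Matrix.of_apply, hA]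
    congr 1
    push_cast [Fin.coe_castSucc, Fin.val_succ]
    ring
  have e6 : (A.submatrix Fin.succ Fin.castSucc).det
      = schur N (n + 1) (fun _ => (c : ℤ) - 1) := by
    unfold schur
    congr 1
    ext i j
    simp only [Matrix.submatrix_apply, Matrix.of_apply, hA]
    congr 1
    push_cast [Fin.coe_castSucc, Fin.val_succ]
    ring
  rw [e1, e2, e3, e4, e5, e6] at key
  linear_combination -key
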